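/- For every ε ∈ (0,1), the cubic H(y) = b(ε) + 6y − 15y² + 8y³ has exactly one root in the open interval (y₁(ε), y₂(ε)); this root ȳ is negative and lies in (−1/8, 0). -/
import Mathlib


/-- The parameter `b(ε) = 1/2 − ((1 − 3ε²)/4)·√(4 − 3ε²)` of the Sasaki–Einstein
metric `Y^{p,q}`, with `ε = q/p`. -/
noncomputable def ypqB (ε : ℝ) : ℝ :=
  1/2 - ((1 - 3*ε^2)/4) * Real.sqrt (4 - 3*ε^2)

/-- The endpoint `y₁(ε) = (2 − 3ε − √(4 − 3ε²))/4`. -/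
noncomputable def ypqY1 (ε : ℝ) : ℝ := (2 - 3*ε - Real.sqrt (4 - 3*ε^2))/4

/-- The endpoint `y₂(ε) = (2 + 3ε − √(4 − 3ε²))/4`. -/
noncomputable def ypqY2 (ε : ℝ) : ℝ := (2 + 3*ε - Real.sqrt (4 - 3*ε^2))/4

/-- Auxiliary intermediate-value lemma for the cubic `b + 6y - 15y² + 8y³`. -/
lemma ypq_cubic_ivt (b a : ℝ) (ha : a < 0)
    (hHa : b + 6*a - 15*a^2 + 8*a^3 < 0) (hb : 0 < b) :
    ∃ y ∈ Set.Ioo a 0, b + 6*y - 15*y^2 + 8*y^3 = 0 := by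
  have hc : ContinuousOn (fun y : ℝ => b + 6*y - 15*y^2 + 8*y^3) (Set.Icc a 0) := by
    fun_prop
  have h0 : (0:ℝ) ∈ Set.Ioo (b + 6*a - 15*a^2 + 8*a^3)
      (b + 6*(0:ℝ) - 15*(0:ℝ)^2 + 8*(0:ℝ)^3) := by
    refine ⟨hHa, ?_⟩
    norm_num
    exact hb
  obtain ⟨y, hy, hyy⟩ := intermediate_value_Ioo (le_of_lt ha) hc h0
  exact ⟨y, hy, hyy⟩

set_option maxHeartbeats 2000000 in
/-- For every `ε ∈ (0,1)`, the cubic `H(y) = b(ε) + 6y − 15y² + 8y³` has exactly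
one root in the open interval `(y₁(ε), y₂(ε))`; this root `ȳ` is negative and
lies in `(−1/8, 0)`. -/
theorem ypq_unique_minimal_level :
    ∀ ε ∈ Set.Ioo (0 : ℝ) 1, ∃ ybar : ℝ,
      ybar ∈ Set.Ioo (ypqY1 ε) (ypqY2 ε) ∧
      ypqB ε + 6*ybar - 15*ybar^2 + 8*ybar^3 = 0 ∧
      ybar ∈ Set.Ioo (-1/8 : ℝ) 0 ∧
      ∀ y ∈ Set.Ioo (ypqY1 ε) (ypqY2 ε),
        ypqB ε + 6*y - 15*y^2 + 8*y^3 = 0 → y = ybar := by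
  intro ε hε
  obtain ⟨hε0, hε1⟩ := hε
  obtain ⟨s, hs_def⟩ : ∃ t : ℝ, t = Real.sqrt (4 - 3*ε^2) := ⟨_, rfl⟩
  have hsq : (0:ℝ) ≤ 4 - 3*ε^2 := by nlinarith
  have hs2 : s^2 = 4 - 3*ε^2 := by rw [hs_def]; exact Real.sq_sqrt hsq
  have hs0 : (0:ℝ) ≤ s := hs_def ▸ Real.sqrt_nonneg _
  have hs1 : 1 < s := by nlinarith
  have hsl2 : s < 2 := by nlinarith
  have hbdef : ypqB ε = 1/2 - ((1 - 3*ε^2)/4) * s := by rw [hs_def]; rfl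
  have hy1def : ypqY1 ε = (2 - 3*ε - s)/4 := by rw [hs_def]; rfl
  have hy2def : ypqY2 ε = (2 + 3*ε - s)/4 := by rw [hs_def]; rfl
  have he2 : (0:ℝ) < 1 - ε^2 := by nlinarith
  have h27 : 0 < ε^2 * (1 - ε^2)^2 := by positivity
  have husq : ((1 - 3*ε^2)*s)^2 = 4 - 27*(ε^2 * (1 - ε^2)^2) := by
    have : ((1 - 3*ε^2)*s)^2 = (1 - 3*ε^2)^2 * s^2 := by ring
    rw [this, hs2]; ring
  -- b ∈ (0,1)
  have hb0 : 0 < ypqB ε := by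
    rw [hbdef]
    nlinarith [sq_nonneg ((1 - 3*ε^2)*s - 2), husq, h27]
  have hb1 : ypqB ε < 1 := by
    rw [hbdef]
    nlinarith [sq_nonneg ((1 - 3*ε^2)*s + 2), husq, h27]
  -- y₁ < 0 < y₂ < 1, y₃ := (1+s)/2 > 1
  have hy1neg : ypqY1 ε < 0 := by
    rw [hy1def]
    have hprod : 0 < (s - (2 - 3*ε)) * (s + (2 - 3*ε)) := by nlinarith
    have hsum : 0 < s + (2 - 3*ε) := by nlinarith
    nlinarith
  have hy2pos : 0 < ypqY2 ε := by rw [hy2def]; nlinarith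
  have hy2lt1 : ypqY2 ε < 1 := by rw [hy2def]; nlinarith
  -- key factorization: b - 3y² + 2y³ = 2(y-y₁)(y-y₂)(y-(1+s)/2)
  have key : ∀ y : ℝ, ypqB ε - 3*y^2 + 2*y^3
      = 2*(y - ypqY1 ε)*(y - ypqY2 ε)*(y - (1+s)/2) := by
    intro y
    rw [hbdef, hy1def, hy2def]
    linear_combination ((3/8)*y + (s-3)/16) * hs2
  -- H(y₁) = 6 y₁ (1-y₁)² < 0
  have hg1 : ypqB ε - 3*(ypqY1 ε)^2 + 2*(ypqY1 ε)^3 = 0 := by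
    rw [key]; ring
  have h1my1 : 0 < 1 - ypqY1 ε := by linarith
  have hH1 : ypqB ε + 6*(ypqY1 ε) - 15*(ypqY1 ε)^2 + 8*(ypqY1 ε)^3 < 0 := by
    nlinarith [hg1, mul_pos (neg_pos.mpr hy1neg) (mul_pos h1my1 h1my1)]
  -- existence via IVT on [y₁, 0]
  obtain ⟨ybar, hybar_mem, hybar_root⟩ := ypq_cubic_ivt (ypqB ε) (ypqY1 ε) hy1neg hH1 hb0
  obtain ⟨hybar1, hybar0⟩ := hybar_mem
  -- ybar > -1/8 from b < 1
  have hybarlt1 : ybar < 1 := by linarith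
  have hybar8 : -1/8 < ybar := by
    nlinarith [sq_nonneg (ybar - 1), hybar_root, hb1]
  -- general step: any root in (y₁,y₂) lies in (-1/8, 0)
  have hstep : ∀ y ∈ Set.Ioo (ypqY1 ε) (ypqY2 ε),
      ypqB ε + 6*y - 15*y^2 + 8*y^3 = 0 → -1/8 < y ∧ y < 0 := by
    intro y ⟨hy1, hy2⟩ hroot
    have hylt1 : y < 1 := lt_trans hy2 hy2lt1
    have h8 : -1/8 < y := by nlinarith [sq_nonneg (y - 1)]
    have hy3 : y < (1+s)/2 := by nlinarith
    have hgpos : 0 < ypqB ε - 3*y^2 + 2*y^3 := by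
      rw [key]
      have h1 : 0 < y - ypqY1 ε := by linarith
      have h2 : 0 < ypqY2 ε - y := by linarith
      have h3 : 0 < (1+s)/2 - y := by linarith
      nlinarith [mul_pos (mul_pos h1 h2) h3]
    -- H(y)=0 ⇒ 6y(1-y)² = -(g y) < 0 ⇒ y < 0
    have hyneg : y < 0 := by nlinarith [sq_nonneg (1 - y), hroot, hgpos]
    exact ⟨h8, hyneg⟩
  refine ⟨ybar, ⟨hybar1, lt_trans hybar0 hy2pos⟩, hybar_root, ⟨hybar8, hybar0⟩, ?_⟩
  intro y hy hroot
  obtain ⟨h8, hneg⟩ := hstep y hy hroot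
  have hQ : 0 < 6 - 15*(y + ybar) + 8*(y^2 + y*ybar + ybar^2) := by
    nlinarith [sq_nonneg (y + ybar), sq_nonneg (y - ybar)]
  have hfac : (y - ybar) * (6 - 15*(y + ybar) + 8*(y^2 + y*ybar + ybar^2)) = 0 := by
    linear_combination hroot - hybar_root
  rcases mul_eq_zero.mp hfac with h | h
  · linarith [sub_eq_zero.mp h]
  · exact absurd h (ne_of_gt hQ)
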